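/- Let q = 2 and π = x² + x + 1 ∈ F_2[x], and let α ∈ K_∞ satisfy α² + α + 1 = 0. Then α is not 0-approximable: no sequence of 0-approximations of α converges to α. (Second assertion of Example 8.4 of the paper: the roots of α² + α + 1 = 0 are explicit elements that are (−1)-approximable but not 0-approximable.) -/

import Mathlib

open Filter Polynomial MeasureTheory IsDedekindDomain
open scoped Multiplicative

local notation "ℤₘ₀" => WithZero (Multiplicative ℤ)

/-- The real absolute value attached to a `ℤₘ₀`-valued valuation with base `q`:
`Multiplicative.ofAdd n ↦ q ^ n` and `0 ↦ 0`. -/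
noncomputable def zabs (q : ℕ) (x : WithZero (Multiplicative ℤ)) : ℝ :=
  if hx : x = 0 then 0 else (q : ℝ) ^ Multiplicative.toAdd (WithZero.unzero hx)

variable (Fq : Type) [Field Fq] [Fintype Fq]

/-- The height-one prime `(π)` of `F_q[x]` attached to an irreducible polynomial `π`. -/
noncomputable def piPrime (π : Polynomial Fq) (hirr : Irreducible π) :
    HeightOneSpectrum (Polynomial Fq) where
  asIdeal := Ideal.span {π}
  isPrime := (Ideal.span_singleton_prime hirr.ne_zero).mpr hirr.prime
  ne_bot := by
    simp only [ne_eq, Ideal.span_singleton_eq_bot]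
    exact hirr.ne_zero

/-- The completion `K_∞` of `K = F_q(x)` with respect to the `π`-adic valuation `ν`
(normalized by `ν π = 1`). -/
noncomputable abbrev Kinf (π : Polynomial Fq) (hirr : Irreducible π) : Type :=
  (piPrime Fq π hirr).adicCompletion (RatFunc Fq)

/-- The absolute value `|h| = q ^ (-ν h)` on `K_∞`. -/
noncomputable def absKinf (q : ℕ) (π : Polynomial Fq) (hirr : Irreducible π)
    (h : Kinf Fq π hirr) : ℝ :=
  zabs q (Valued.v h)

/-- The inclusion `K = F_q(x) → K_∞`. -/
noncomputable def toKinf (π : Polynomial Fq) (hirr : Irreducible π) (r : RatFunc Fq) :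
    Kinf Fq π hirr := r

/-- The ring `A` of rational functions regular away from the closed point defined by `π`:
the `F_q`-subalgebra of `F_q(x)` generated by `1/π`, `x/π` and `x²/π`. -/
noncomputable def ringA (π : Polynomial Fq) : Subalgebra Fq (RatFunc Fq) :=
  Algebra.adjoin Fq
    {(algebraMap (Polynomial Fq) (RatFunc Fq) π)⁻¹,
      algebraMap (Polynomial Fq) (RatFunc Fq) X / algebraMap (Polynomial Fq) (RatFunc Fq) π,
      algebraMap (Polynomial Fq) (RatFunc Fq) (X ^ 2) / algebraMap (Polynomial Fq) (RatFunc Fq) π}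

/-- `f/g` is an `M`-approximation of `α ∈ K_∞`: `f, g ∈ A`, `g ≠ 0`, `fA + gA = A` and
`|α - f/g| < q^(-M)/|g|²`. -/
def IsApproxA (q : ℕ) (π : Polynomial Fq) (hirr : Irreducible π) (M : ℤ)
    (α : Kinf Fq π hirr) (f g : ringA Fq π) : Prop :=
  g ≠ 0 ∧ Ideal.span {f, g} = (⊤ : Ideal (ringA Fq π)) ∧
    absKinf Fq q π hirr
        (α - toKinf Fq π hirr (f : RatFunc Fq) / toKinf Fq π hirr (g : RatFunc Fq)) <
      (q : ℝ) ^ (-M) / absKinf Fq q π hirr (toKinf Fq π hirr (g : RatFunc Fq)) ^ 2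

/-- `π = x² + x + 1` over `F₂`. -/
noncomputable def piPoly : Polynomial (ZMod 2) := X ^ 2 + X + 1

lemma piPoly_monic : (piPoly).Monic := by
  unfold piPoly; monicity!

lemma piPoly_natDegree : (piPoly).natDegree = 2 := by
  unfold piPoly; compute_degree!

lemma piPoly_irreducible : Irreducible piPoly := by
  by_contra h
  rcases (piPoly_monic.not_irreducible_iff_exists_add_mul_eq_coeff piPoly_natDegree).mp h with
    ⟨c₁, c₂, h0, h1⟩
  have e0 : (piPoly).coeff 0 = 1 := by
    simp [piPoly, coeff_one, coeff_X]
  have e1 : (piPoly).coeff 1 = 1 := by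
    simp [piPoly, coeff_one, coeff_X]
  rw [e0] at h0
  rw [e1] at h1
  revert h0 h1
  revert c₁ c₂
  decide


noncomputable abbrev vP : HeightOneSpectrum (Polynomial (ZMod 2)) :=
  piPrime (ZMod 2) piPoly piPoly_irreducible

lemma piPoly_ne_zero : piPoly ≠ 0 := piPoly_irreducible.ne_zero

lemma intVal_piPoly : vP.intValuationDef piPoly = Multiplicative.ofAdd (-1 : ℤ) :=
  IsDedekindDomain.HeightOneSpectrum.intValuation_singleton (v := vP) piPoly_ne_zero rfl

lemma intVal_ge {h : Polynomial (ZMod 2)} (hh : h ≠ 0) {n : ℕ} (hd : h.natDegree ≤ 2 * n) :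
    ((Multiplicative.ofAdd (-(n : ℤ)) : Multiplicative ℤ) : ℤₘ₀) ≤ vP.intValuationDef h := by
  by_contra hc
  push_neg at hc
  have hne : vP.intValuationDef h ≠ 0 :=
    IsDedekindDomain.HeightOneSpectrum.intValuation_ne_zero vP h hh
  obtain ⟨u, hu⟩ := WithZero.ne_zero_iff_exists.mp hne
  rw [← hu] at hc
  have hc' : u < Multiplicative.ofAdd (-(n : ℤ)) := WithZero.coe_lt_coe.mp hc
  have hlt : Multiplicative.toAdd u < -(n : ℤ) := by
    simpa using Multiplicative.toAdd_lt.mpr hc'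
  have hle : vP.intValuationDef h ≤ Multiplicative.ofAdd (-((n+1 : ℕ) : ℤ)) := by
    rw [← hu, WithZero.coe_le_coe]
    apply Multiplicative.toAdd_le.mp
    simp only [toAdd_ofAdd]
    push_cast
    omega
  rw [← IsDedekindDomain.HeightOneSpectrum.intValuation_apply, show ((Multiplicative.ofAdd (-((n+1 : ℕ) : ℤ)) : Multiplicative ℤ) : ℤₘ₀) = WithZero.exp (-((n+1 : ℕ) : ℤ)) from rfl, IsDedekindDomain.HeightOneSpectrum.intValuation_le_pow_iff_dvd] at hle
  have hdvd : piPoly ^ (n + 1) ∣ h := by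
    rw [show vP.asIdeal = Ideal.span {piPoly} from rfl, Ideal.span_singleton_pow] at hle
    exact span_singleton_dvd_span_singleton_iff_dvd.mp hle
  have := Polynomial.natDegree_le_of_dvd hdvd hh
  rw [Polynomial.natDegree_pow, piPoly_natDegree] at this
  omega

/-- The subalgebra of fractions `h/π^n` with `deg h ≤ 2n`. -/
noncomputable def SA : Subalgebra (ZMod 2) (RatFunc (ZMod 2)) where
  carrier := {r | ∃ n : ℕ, ∃ h : Polynomial (ZMod 2), h.natDegree ≤ 2 * n ∧
    r = algebraMap (Polynomial (ZMod 2)) (RatFunc (ZMod 2)) h /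
      algebraMap (Polynomial (ZMod 2)) (RatFunc (ZMod 2)) piPoly ^ n}
  mul_mem' := by
    rintro r s ⟨n1, h1, hd1, rfl⟩ ⟨n2, h2, hd2, rfl⟩
    refine ⟨n1 + n2, h1 * h2, ?_, ?_⟩
    · have := Polynomial.natDegree_mul_le (p := h1) (q := h2)
      omega
    · rw [map_mul, pow_add, div_mul_div_comm]
  add_mem' := by
    rintro r s ⟨n1, h1, hd1, rfl⟩ ⟨n2, h2, hd2, rfl⟩
    have hπ : algebraMap (Polynomial (ZMod 2)) (RatFunc (ZMod 2)) piPoly ≠ 0 := by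
      simpa using piPoly_ne_zero
    refine ⟨n1 + n2, h1 * piPoly ^ n2 + h2 * piPoly ^ n1, ?_, ?_⟩
    · apply le_trans (Polynomial.natDegree_add_le _ _)
      have e1 := Polynomial.natDegree_mul_le (p := h1) (q := piPoly ^ n2)
      have e2 := Polynomial.natDegree_mul_le (p := h2) (q := piPoly ^ n1)
      rw [Polynomial.natDegree_pow, piPoly_natDegree] at e1 e2
      omega
    · rw [div_add_div _ _ (pow_ne_zero _ hπ) (pow_ne_zero _ hπ), map_add, map_mul, map_mul,
        map_pow, map_pow, pow_add]
      ring
  algebraMap_mem' := fun c => ⟨0, Polynomial.C c, by simp, by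
    rw [pow_zero, div_one, RatFunc.algebraMap_C, RatFunc.algebraMap_eq_C]⟩

lemma ringA_le_SA : ringA (ZMod 2) piPoly ≤ SA := by
  apply Algebra.adjoin_le
  rintro r hr
  simp only [Set.mem_insert_iff, Set.mem_singleton_iff] at hr
  rcases hr with rfl | rfl | rfl
  · exact ⟨1, 1, by simp, by rw [map_one, pow_one, one_div]⟩
  · exact ⟨1, X, by simp [Polynomial.natDegree_X], by rw [pow_one]⟩
  · exact ⟨1, X ^ 2, by simp, by rw [pow_one]⟩

lemma one_le_val_ringA {a : RatFunc (ZMod 2)} (ha : a ∈ ringA (ZMod 2) piPoly) (h0 : a ≠ 0) :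
    1 ≤ vP.valuation (RatFunc (ZMod 2)) a := by
  obtain ⟨n, h, hd, rfl⟩ := ringA_le_SA ha
  have hπ : algebraMap (Polynomial (ZMod 2)) (RatFunc (ZMod 2)) piPoly ≠ 0 := by
    simpa using piPoly_ne_zero
  have hh : h ≠ 0 := by
    intro hh0
    apply h0
    rw [hh0, map_zero, zero_div]
  rw [map_div₀, map_pow, IsDedekindDomain.HeightOneSpectrum.valuation_of_algebraMap,
    IsDedekindDomain.HeightOneSpectrum.valuation_of_algebraMap,
    IsDedekindDomain.HeightOneSpectrum.intValuation_apply,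
    IsDedekindDomain.HeightOneSpectrum.intValuation_apply, intVal_piPoly]
  have hc : ((Multiplicative.ofAdd (-1 : ℤ) : Multiplicative ℤ) : ℤₘ₀) ^ n =
      ((Multiplicative.ofAdd (-(n : ℤ)) : Multiplicative ℤ) : ℤₘ₀) := by
    rw [← WithZero.coe_pow, WithZero.coe_inj]
    simp [← ofAdd_nsmul]
  rw [hc, one_le_div₀ (by exact WithZero.zero_lt_coe _)]
  exact intVal_ge hh hd

lemma zabs_zero (q : ℕ) : zabs q 0 = 0 := dif_pos rfl

lemma zabs_of_ne_zero (q : ℕ) {x : ℤₘ₀} (hx : x ≠ 0) :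
    zabs q x = (q : ℝ) ^ Multiplicative.toAdd (WithZero.unzero hx) := dif_neg hx

lemma zabs_pos {q : ℕ} (hq : 0 < q) {x : ℤₘ₀} (hx : x ≠ 0) : 0 < zabs q x := by
  rw [zabs_of_ne_zero q hx]
  exact zpow_pos (by exact_mod_cast hq) _

lemma zabs_strictMono {q : ℕ} (hq : 1 < q) : StrictMono (zabs q) := by
  intro x y hxy
  have hy : y ≠ 0 := fun h => by simp [h] at hxy
  by_cases hx : x = 0
  · rw [hx, zabs_zero]
    exact zabs_pos (by omega) hy
  · rw [zabs_of_ne_zero q hx, zabs_of_ne_zero q hy]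
    apply zpow_lt_zpow_right₀ (by exact_mod_cast hq)
    have : (WithZero.unzero hx) < (WithZero.unzero hy) := by
      rw [← WithZero.coe_lt_coe, WithZero.coe_unzero, WithZero.coe_unzero]
      exact hxy
    exact this

lemma zabs_one (q : ℕ) : zabs q 1 = 1 := by
  rw [zabs_of_ne_zero q one_ne_zero]
  have : WithZero.unzero (one_ne_zero : (1:ℤₘ₀) ≠ 0) = 1 := by
    rw [← WithZero.coe_inj, WithZero.coe_unzero, WithZero.coe_one]
  rw [this]
  simp

lemma zabs_mul {q : ℕ} (hq : 0 < q) (x y : ℤₘ₀) :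
    zabs q (x * y) = zabs q x * zabs q y := by
  by_cases hx : x = 0
  · simp [hx, zabs_zero]
  by_cases hy : y = 0
  · simp [hy, zabs_zero]
  have hxy : x * y ≠ 0 := mul_ne_zero hx hy
  rw [zabs_of_ne_zero q hx, zabs_of_ne_zero q hy, zabs_of_ne_zero q hxy,
    WithZero.unzero_mul hxy, toAdd_mul, zpow_add₀ (by positivity)]

lemma no_cube_root (r : RatFunc (ZMod 2)) : r ^ 2 + r + 1 ≠ 0 := by
  intro h
  set p := r.num with hp
  set q := r.denom with hq
  have hq0 : q ≠ 0 := r.denom_ne_zero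
  have hr : algebraMap (Polynomial (ZMod 2)) (RatFunc (ZMod 2)) p /
      algebraMap _ _ q = r := r.num_div_denom
  have hq0' : algebraMap (Polynomial (ZMod 2)) (RatFunc (ZMod 2)) q ≠ 0 := by
    simpa using hq0
  rw [← hr] at h
  have key'' : algebraMap (Polynomial (ZMod 2)) (RatFunc (ZMod 2)) p ^ 2 +
      algebraMap (Polynomial (ZMod 2)) (RatFunc (ZMod 2)) p * algebraMap _ _ q +
      algebraMap (Polynomial (ZMod 2)) (RatFunc (ZMod 2)) q ^ 2 = 0 := by
    have e : algebraMap (Polynomial (ZMod 2)) (RatFunc (ZMod 2)) p ^ 2 +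
        algebraMap (Polynomial (ZMod 2)) (RatFunc (ZMod 2)) p * algebraMap _ _ q +
        algebraMap (Polynomial (ZMod 2)) (RatFunc (ZMod 2)) q ^ 2 =
        ((algebraMap (Polynomial (ZMod 2)) (RatFunc (ZMod 2)) p / algebraMap _ _ q) ^ 2 +
          algebraMap (Polynomial (ZMod 2)) (RatFunc (ZMod 2)) p / algebraMap _ _ q + 1) *
          algebraMap (Polynomial (ZMod 2)) (RatFunc (ZMod 2)) q ^ 2 := by
      field_simp
    rw [e, h, zero_mul]
  have key : p^2 + p*q + q^2 = 0 := by
    apply (map_eq_zero_iff _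
      (IsFractionRing.injective (Polynomial (ZMod 2)) (RatFunc (ZMod 2)))).mp
    simp only [map_add, map_mul, map_pow]
    exact key''
  have hcop : IsCoprime p q := r.isCoprime_num_denom
  have hdvd1 : q ∣ p ^ 2 := ⟨-(p + q), by linear_combination key⟩
  have hdvd2 : p ∣ q ^ 2 := ⟨-(p + q), by linear_combination key⟩
  have hup : IsUnit p := (hcop.pow_right (n := 2)).isUnit_of_dvd hdvd2
  have huq : IsUnit q := (hcop.symm.pow_right (n := 2)).isUnit_of_dvd hdvd1
  obtain ⟨a, ha, hap⟩ := Polynomial.isUnit_iff.mp hup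
  obtain ⟨b, hb, hbq⟩ := Polynomial.isUnit_iff.mp huq
  have honly : ∀ x : ZMod 2, IsUnit x → x = 1 := by decide
  rw [← hap, ← hbq, honly a ha, honly b hb] at key
  simp only [map_one, one_pow, one_mul] at key
  have h3 := congrArg (Polynomial.eval 0) key
  simp at h3
  exact absurd h3 (by decide)

set_option maxHeartbeats 2000000 in
set_option synthInstance.maxHeartbeats 1000000 in
/-- Example 8.4, second assertion: for `q = 2`, `π = x² + x + 1`, any
`α ∈ K_∞` with `α² + α + 1 = 0` is not `0`-approximable: no sequence of `0`-approximations
of `α` converges to `α`. -/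
theorem quadratic_root_not_zero_approximable
    (α : Kinf (ZMod 2) piPoly piPoly_irreducible) (hα : α ^ 2 + α + 1 = 0) :
    ¬ ∃ f g : ℕ → ringA (ZMod 2) piPoly,
        (∀ n, IsApproxA (ZMod 2) 2 piPoly piPoly_irreducible 0 α (f n) (g n)) ∧
        Tendsto
          (fun n => toKinf (ZMod 2) piPoly piPoly_irreducible ((f n : RatFunc (ZMod 2))) /
            toKinf (ZMod 2) piPoly piPoly_irreducible ((g n : RatFunc (ZMod 2))))
          atTop (nhds α) := by
  rintro ⟨f, g, happ, -⟩
  obtain ⟨hg, -, hlt⟩ := happ 0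
  set fK : RatFunc (ZMod 2) := ((f 0 : ringA (ZMod 2) piPoly) : RatFunc (ZMod 2)) with hfK
  set gK : RatFunc (ZMod 2) := ((g 0 : ringA (ZMod 2) piPoly) : RatFunc (ZMod 2)) with hgK
  have hgK0 : gK ≠ 0 := by
    simpa [hgK, ne_eq, ZeroMemClass.coe_eq_zero] using hg
  have hb1 : (1 : ℤₘ₀) ≤ vP.valuation (RatFunc (ZMod 2)) gK := one_le_val_ringA (g 0).2 hgK0
  set ft : Kinf (ZMod 2) piPoly piPoly_irreducible :=
    toKinf (ZMod 2) piPoly piPoly_irreducible fK with hft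
  set gt : Kinf (ZMod 2) piPoly piPoly_irreducible :=
    toKinf (ZMod 2) piPoly piPoly_irreducible gK with hgt
  have hvg : Valued.v gt = vP.valuation (RatFunc (ZMod 2)) gK :=
    IsDedekindDomain.HeightOneSpectrum.valuedAdicCompletion_eq_valuation' vP gK
  have hgt0 : gt ≠ 0 := by
    intro h0
    rw [h0, map_zero] at hvg
    rw [← hvg] at hb1
    exact absurd hb1 (by simp)
  set β := ft / gt with hβdef
  set a := Valued.v (α - β) with hadef
  set b := Valued.v gt with hbdef
  have hb1' : (1 : ℤₘ₀) ≤ b := by rw [hvg]; exact hb1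
  -- transfer the real inequality to ℤₘ₀
  unfold absKinf at hlt
  have hzb : (1:ℝ) ≤ zabs 2 b := by
    rw [← zabs_one 2]
    exact (zabs_strictMono one_lt_two).monotone hb1'
  have hzb0 : (0:ℝ) < zabs 2 b := lt_of_lt_of_le one_pos hzb
  have hlt' : zabs 2 a < 1 / zabs 2 b ^ 2 := by
    have : ((2:ℕ):ℝ) ^ (-(0:ℤ)) = 1 := by norm_num
    rw [this] at hlt
    exact hlt
  have hab2 : a * b ^ 2 < 1 := by
    apply (zabs_strictMono one_lt_two).lt_iff_lt.mp
    have e : zabs 2 (a * b ^ 2) = zabs 2 a * zabs 2 b ^ 2 := by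
      rw [zabs_mul two_pos, sq, zabs_mul two_pos, ← sq]
    rw [e, zabs_one]
    rw [lt_div_iff₀ (by positivity)] at hlt'
    exact hlt'
  have hb2 : (1 : ℤₘ₀) ≤ b ^ 2 := by
    calc (1 : ℤₘ₀) = 1 * 1 := (mul_one 1).symm
    _ ≤ b * b := mul_le_mul' hb1' hb1'
    _ = b ^ 2 := (sq b).symm
  have ha1 : a < 1 := by
    calc a = a * 1 := (mul_one a).symm
    _ ≤ a * b ^ 2 := mul_le_mul_right hb2 a
    _ < 1 := hab2
  -- characteristic two
  have h2R : (2 : RatFunc (ZMod 2)) = 0 := by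
    have h := (map_ofNat (algebraMap (ZMod 2) (RatFunc (ZMod 2))) 2).symm
    rw [h, show (2 : ZMod 2) = 0 from by decide, map_zero]
  have htoK : ∀ r : RatFunc (ZMod 2), toKinf (ZMod 2) piPoly piPoly_irreducible r =
      algebraMap (RatFunc (ZMod 2)) (Kinf (ZMod 2) piPoly piPoly_irreducible) r := fun _ => rfl
  have h2 : (2 : Kinf (ZMod 2) piPoly piPoly_irreducible) = 0 := by
    rw [← map_ofNat (algebraMap (RatFunc (ZMod 2)) (Kinf (ZMod 2) piPoly piPoly_irreducible)) 2,
      h2R, map_zero]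
  -- the norm form N = f² + fg + g²
  set N : ringA (ZMod 2) piPoly := f 0 * f 0 + f 0 * g 0 + g 0 * g 0 with hNdef
  have hNK : ((N : ringA (ZMod 2) piPoly) : RatFunc (ZMod 2)) = fK * fK + fK * gK + gK * gK := by
    push_cast [hNdef]
    ring
  have hNt : toKinf (ZMod 2) piPoly piPoly_irreducible (N : RatFunc (ZMod 2)) =
      ft * ft + ft * gt + gt * gt := by
    rw [hNK, hft, hgt]
    simp only [htoK, map_add, map_mul]
  have hβ : β * gt = ft := div_mul_cancel₀ ft hgt0
  have hkey : toKinf (ZMod 2) piPoly piPoly_irreducible (N : RatFunc (ZMod 2)) =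
      (β + α) * (β + α + 1) * gt ^ 2 := by
    rw [hNt, ← hβ]
    linear_combination (-(gt^2)) * hα + ((1 - α * β) * gt^2) * h2
  have hba : β + α = α - β := by linear_combination β * h2
  have hvsum : Valued.v (α - β + 1) ≤ 1 := by
    calc Valued.v ((α - β) + 1) ≤ max (Valued.v (α - β)) (Valued.v (1 :
        Kinf (ZMod 2) piPoly piPoly_irreducible)) := Valuation.map_add _ _ _
    _ ≤ 1 := by
      rw [map_one]
      exact max_le (le_of_lt ha1) le_rfl
  have hvN : Valued.v (toKinf (ZMod 2) piPoly piPoly_irreducible (N : RatFunc (ZMod 2))) < 1 := by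
    rw [hkey, map_mul, map_mul, map_pow, hba]
    show a * Valued.v (α - β + 1) * b ^ 2 < 1
    calc a * Valued.v (α - β + 1) * b ^ 2 ≤ a * 1 * b ^ 2 := by
          apply mul_le_mul_left
          exact mul_le_mul_right hvsum a
    _ = a * b ^ 2 := by rw [mul_one]
    _ < 1 := hab2
  have hN0 : N = 0 := by
    by_contra hN
    have hNK0 : ((N : ringA (ZMod 2) piPoly) : RatFunc (ZMod 2)) ≠ 0 := by
      simpa [ne_eq, ZeroMemClass.coe_eq_zero] using hN
    have h1 : (1 : ℤₘ₀) ≤ vP.valuation (RatFunc (ZMod 2)) (N : RatFunc (ZMod 2)) := one_le_val_ringA N.2 hNK0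
    have he : Valued.v (toKinf (ZMod 2) piPoly piPoly_irreducible (N : RatFunc (ZMod 2))) =
        vP.valuation (RatFunc (ZMod 2)) (N : RatFunc (ZMod 2)) :=
      IsDedekindDomain.HeightOneSpectrum.valuedAdicCompletion_eq_valuation' vP _
    rw [he] at hvN
    exact absurd h1 (not_le.mpr hvN)
  have hzero : fK * fK + fK * gK + gK * gK = 0 := by
    rw [← hNK, hN0, ZeroMemClass.coe_zero]
  apply no_cube_root (fK / gK)
  field_simp
  linear_combination hzero
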